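/- Nabla-monotone l'Hôpital rule on the q-scale (right endpoint): fix q ∈ (0,1), let a = q^m and b = q^n be points of the q-scale with a < b (m, n ∈ ℤ), and let f, g : (0,∞) → ℝ. Suppose that either D_q g(x) > 0 for every point x of the q-scale with a < x ≤ b, or D_q g(x) < 0 for every such x. If the function x ↦ D_q f(x)/D_q g(x) is strictly increasing on the set {x ∈ q^ℤ : a < x ≤ b}, then the function x ↦ (f(x) − f(b))/(g(x) − g(b)) is strictly increasing on the set {x ∈ q^ℤ : a ≤ x < b}. (Note g(x) ≠ g(b) for such x, since g is strictly monotone along the q-scale points of [a,b].) -/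

import Mathlib

noncomputable def qDeriv (q : ℝ) (f : ℝ → ℝ) (x : ℝ) : ℝ :=
  (f (q * x) - f x) / ((q - 1) * x)

private lemma med_aux {A B c d : ℝ} (hB : B < 0) (hd : d < 0) (h : c / d < A / B) :
    (A + c) / (B + d) < A / B ∧ c / d < (A + c) / (B + d) := by
  have hBd : B + d < 0 := by linarith
  have h1 : c * B < A * d := by
    have h' : (-c) / (-d) < (-A) / (-B) := by
      rwa [neg_div_neg_eq, neg_div_neg_eq]
    have := (div_lt_div_iff₀ (by linarith : (0:ℝ) < -d) (by linarith : (0:ℝ) < -B)).1 h'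
    nlinarith [this]
  constructor
  · have : (-(A + c)) / (-(B + d)) < (-A) / (-B) := by
      rw [div_lt_div_iff₀ (by linarith : (0:ℝ) < -(B + d)) (by linarith : (0:ℝ) < -B)]
      nlinarith
    rwa [neg_div_neg_eq, neg_div_neg_eq] at this
  · have : (-c) / (-d) < (-(A + c)) / (-(B + d)) := by
      rw [div_lt_div_iff₀ (by linarith : (0:ℝ) < -d) (by linarith : (0:ℝ) < -(B + d))]
      nlinarith
    rwa [neg_div_neg_eq, neg_div_neg_eq] at this

private theorem qscale_aux
    (q : ℝ) (hq0 : 0 < q) (hq1 : q < 1) (m n : ℤ) (f g : ℝ → ℝ)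
    (hab : (q:ℝ) ^ m < q ^ n)
    (hg : ∀ x ∈ {x : ℝ | (∃ k : ℤ, x = q ^ k) ∧ q ^ m < x ∧ x ≤ q ^ n},
      0 < qDeriv q g x)
    (hmono : StrictMonoOn (fun x => qDeriv q f x / qDeriv q g x)
      {x : ℝ | (∃ k : ℤ, x = q ^ k) ∧ q ^ m < x ∧ x ≤ q ^ n}) :
    StrictMonoOn (fun x => (f x - f (q ^ n)) / (g x - g (q ^ n)))
      {x : ℝ | (∃ k : ℤ, x = q ^ k) ∧ q ^ m ≤ x ∧ x < q ^ n} := by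
  have hqne : q ≠ 0 := ne_of_gt hq0
  have hiff : ∀ i j : ℤ, q ^ i < q ^ j ↔ j < i :=
    fun i j => zpow_lt_zpow_iff_right_of_lt_one₀ hq0 hq1
  have hleiff : ∀ i j : ℤ, q ^ i ≤ q ^ j ↔ j ≤ i :=
    fun i j => zpow_le_zpow_iff_right_of_lt_one₀ hq0 hq1
  have hmn : n < m := (hiff m n).1 hab
  have hqx : ∀ k : ℤ, q * q ^ k = q ^ (k + 1) := by
    intro k; rw [zpow_add_one₀ hqne]; ring
  set S : Set ℝ := {x : ℝ | (∃ k : ℤ, x = q ^ k) ∧ q ^ m < x ∧ x ≤ q ^ n} with hSdef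
  have hSmem : ∀ k : ℤ, n ≤ k → k < m → (q : ℝ) ^ k ∈ S :=
    fun k h1 h2 => ⟨⟨k, rfl⟩, (hiff m k).2 h2, (hleiff k n).2 h1⟩
  set r : ℤ → ℝ := fun k => (f (q ^ (k + 1)) - f (q ^ k)) / (g (q ^ (k + 1)) - g (q ^ k))
    with hrdef
  set Φ : ℤ → ℝ := fun k => (f (q ^ k) - f (q ^ n)) / (g (q ^ k) - g (q ^ n)) with hΦdef
  have hdenomneg : ∀ k : ℤ, (q - 1) * q ^ k < 0 :=
    fun k => mul_neg_of_neg_of_pos (by linarith) (zpow_pos hq0 k)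
  have hDg : ∀ k : ℤ, n ≤ k → k < m → g (q ^ (k + 1)) - g (q ^ k) < 0 := by
    intro k h1 h2
    have h := hg _ (hSmem k h1 h2)
    unfold qDeriv at h
    rw [hqx] at h
    rcases div_pos_iff.1 h with ⟨_, h2'⟩ | ⟨h1', _⟩
    · linarith [hdenomneg k]
    · exact h1'
  have hratio : ∀ k : ℤ, qDeriv q f (q ^ k) / qDeriv q g (q ^ k) = r k := by
    intro k
    unfold qDeriv
    rw [hqx]
    have hc : (q - 1) * q ^ k ≠ 0 := ne_of_lt (hdenomneg k)
    rcases eq_or_ne (g (q ^ (k + 1)) - g (q ^ k)) 0 with h0 | h0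
    · simp [hrdef, h0]
    · rw [hrdef]; field_simp
      have : q - 1 ≠ 0 := by linarith
      field_simp
  have hr : ∀ k1 k2 : ℤ, n ≤ k1 → k1 < k2 → k2 < m → r k2 < r k1 := by
    intro k1 k2 h1 h2 h3
    have hx := hmono (hSmem k2 (by omega) h3) (hSmem k1 h1 (by omega))
      ((hiff k2 k1).2 h2)
    simpa only [hratio] using hx
  -- main induction
  have L1 : ∀ d : ℕ, ∀ k : ℤ, k = n + 1 + d → k ≤ m →
      g (q ^ k) - g (q ^ n) < 0 ∧ (k < m → r k < Φ k) := by
    intro d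
    induction d with
    | zero =>
      intro k hk hkm
      have hk' : k = n + 1 := by omega
      subst hk'
      have hnm : n < m := by omega
      refine ⟨hDg n le_rfl hnm, ?_⟩
      intro hkm'
      have hΦeq : Φ (n + 1) = r n := rfl
      rw [hΦeq]
      exact hr n (n + 1) le_rfl (by omega) hkm'
    | succ d ih =>
      intro k hk hkm
      have hk0 : k - 1 = n + 1 + (d : ℤ) := by push_cast at hk ⊢; omega
      obtain ⟨hB, hΦ⟩ := ih (k - 1) hk0 (by omega)
      have hk0m : k - 1 < m := by omega
      have hΔ := hDg (k - 1) (by omega) hk0m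
      have hkeq : (k - 1) + 1 = k := by omega
      rw [hkeq] at hΔ
      have hBk : g (q ^ k) - g (q ^ n) =
          (g (q ^ (k - 1)) - g (q ^ n)) + (g (q ^ k) - g (q ^ (k - 1))) := by ring
      constructor
      · rw [hBk]; linarith
      · intro hkm'
        have hrlt : r (k - 1) < Φ (k - 1) := hΦ hk0m
        have hrk1 : r (k - 1) =
            (f (q ^ k) - f (q ^ (k - 1))) / (g (q ^ k) - g (q ^ (k - 1))) := by
          show (f (q ^ (k - 1 + 1)) - f (q ^ (k - 1))) /
              (g (q ^ (k - 1 + 1)) - g (q ^ (k - 1))) = _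
          rw [hkeq]
        have med := med_aux hB hΔ (by rw [← hrk1]; exact hrlt)
        have hΦk : Φ k = ((f (q ^ (k - 1)) - f (q ^ n)) + (f (q ^ k) - f (q ^ (k - 1)))) /
            ((g (q ^ (k - 1)) - g (q ^ n)) + (g (q ^ k) - g (q ^ (k - 1)))) := by
          rw [hΦdef]; ring_nf
        have h2 : r (k - 1) < Φ k := by rw [hΦk, hrk1]; exact med.2
        exact lt_trans (hr (k - 1) k (by omega) (by omega) hkm') h2
  have L2 : ∀ k : ℤ, n < k → k + 1 ≤ m → Φ (k + 1) < Φ k := by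
    intro k h1 h2
    obtain ⟨hB, hΦ⟩ := L1 (k - (n + 1)).toNat k (by omega) (by omega)
    have hrlt := hΦ (by omega)
    have hΔ := hDg k (by omega) (by omega)
    have med := med_aux hB hΔ hrlt
    have hΦk : Φ (k + 1) = ((f (q ^ k) - f (q ^ n)) + (f (q ^ (k + 1)) - f (q ^ k))) /
        ((g (q ^ k) - g (q ^ n)) + (g (q ^ (k + 1)) - g (q ^ k))) := by
      rw [hΦdef]; ring_nf
    rw [hΦk]
    exact med.1
  have L3 : ∀ d : ℕ, ∀ j k : ℤ, n < j → k ≤ m → k = j + 1 + d → Φ k < Φ j := by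
    intro d
    induction d with
    | zero =>
      intro j k h1 h2 h3
      have : k = j + 1 := by omega
      subst this
      exact L2 j h1 h2
    | succ d ih =>
      intro j k h1 h2 h3
      have h4 : Φ k < Φ (j + 1) := ih (j + 1) k (by omega) h2 (by push_cast at h3 ⊢; omega)
      have h5 : Φ (j + 1) < Φ j := L2 j h1 (by omega)
      linarith
  intro x hx y hy hxy
  obtain ⟨⟨kx, hkx⟩, hax, hxb⟩ := hx
  obtain ⟨⟨ky, hky⟩, hay, hyb⟩ := hy
  subst hkx; subst hky
  have h1 : n < kx := (hiff kx n).1 hxb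
  have h2 : kx ≤ m := (hleiff m kx).1 hax
  have h3 : n < ky := (hiff ky n).1 hyb
  have h4 : ky < kx := (hiff kx ky).1 hxy
  exact L3 (kx - ky - 1).toNat ky kx h3 h2 (by omega)

theorem qscale_lhopital_right_increasing
    (q : ℝ) (hq0 : 0 < q) (hq1 : q < 1) (m n : ℤ) (a b : ℝ)
    (ha : a = q ^ m) (hb : b = q ^ n) (hab : a < b) (f g : ℝ → ℝ)
    (S : Set ℝ) (hS : S = {x : ℝ | (∃ k : ℤ, x = q ^ k) ∧ a < x ∧ x ≤ b})
    (hg : (∀ x ∈ S, 0 < qDeriv q g x) ∨ (∀ x ∈ S, qDeriv q g x < 0))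
    (hmono : StrictMonoOn (fun x => qDeriv q f x / qDeriv q g x) S) :
    StrictMonoOn (fun x => (f x - f b) / (g x - g b))
      {x : ℝ | (∃ k : ℤ, x = q ^ k) ∧ a ≤ x ∧ x < b} := by
  subst ha hb hS
  have hnegD : ∀ (h : ℝ → ℝ) (x : ℝ), qDeriv q (fun y => -h y) x = -qDeriv q h x := by
    intro h x; unfold qDeriv; ring
  rcases hg with hg | hg
  · exact qscale_aux q hq0 hq1 m n f g hab hg hmono
  · have hg' : ∀ x ∈ {x : ℝ | (∃ k : ℤ, x = q ^ k) ∧ q ^ m < x ∧ x ≤ q ^ n},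
        0 < qDeriv q (fun y => -g y) x := by
      intro x hx; rw [hnegD]; linarith [hg x hx]
    have hmono' : StrictMonoOn
        (fun x => qDeriv q (fun y => -f y) x / qDeriv q (fun y => -g y) x)
        {x : ℝ | (∃ k : ℤ, x = q ^ k) ∧ q ^ m < x ∧ x ≤ q ^ n} := by
      intro x hx y hy hxy
      have := hmono hx hy hxy
      simpa only [hnegD, neg_div_neg_eq] using this
    have := qscale_aux q hq0 hq1 m n (fun y => -f y) (fun y => -g y) hab hg' hmono'
    intro x hx y hy hxy
    have h := this hx hy hxy
    simp only [neg_sub_neg] at h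
    have e : ∀ z : ℝ, (f (q^n) - f z) / (g (q^n) - g z) = (f z - f (q^n)) / (g z - g (q^n)) := by
      intro z
      rw [← neg_div_neg_eq]; ring_nf
    simpa only [e] using h
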